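/- Let S¹ = ℝ/ℤ be the circle with its quotient metric. For every α ∈ S¹, every p ∈ S¹, and every n ∈ ℕ, if the set X = {p + i·α : i = 0, ..., n} has at least two elements, then |NND(X)| ≤ 3. -/

import Mathlib

open scoped Classical

namespace ThreeGapAux

noncomputable def del (a : ℝ) (k : ℕ) : ℝ := k * a - round ((k : ℝ) * a)
noncomputable def gg (a : ℝ) (k : ℕ) : ℝ := |del a k|

lemma gg_sub_le {a : ℝ} {l k : ℕ} (h : l ≤ k) : gg a (k - l) ≤ |del a k - del a l| := by
  have hcast : ((k - l : ℕ) : ℝ) = (k : ℝ) - l := by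
    rw [Nat.cast_sub h]
  have hrw : del a k - del a l =
      ((k - l : ℕ) : ℝ) * a - ((round ((k:ℝ)*a) - round ((l:ℝ)*a) : ℤ) : ℝ) := by
    simp only [del, hcast]
    push_cast
    ring
  rw [hrw]
  exact round_le _ _

lemma gg_eq_of_sub_zero {a : ℝ} {l k : ℕ} (hlk : l ≤ k) (h0 : gg a (k - l) = 0) :
    gg a k = gg a l := by
  have h0' : ((k - l : ℕ) : ℝ) * a = round (((k - l : ℕ) : ℝ) * a) := by
    have := abs_eq_zero.mp h0
    simp only [del] at this
    linarith [this]
  have hcast : ((k - l : ℕ) : ℝ) = (k : ℝ) - l := by rw [Nat.cast_sub hlk]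
  have hk : (k : ℝ) * a = (l : ℝ) * a + (round (((k - l : ℕ) : ℝ) * a) : ℤ) := by
    rw [← h0', hcast]; ring
  have : del a k = del a l := by
    simp only [del, hk, round_add_intCast]
    push_cast
    ring
  simp only [gg, this]

/-- `r` is a record index for `k ↦ gg a k`. -/
def IsRec (a : ℝ) (r : ℕ) : Prop :=
  gg a r ≠ 0 ∧ ∀ k, 1 ≤ k → k < r → gg a k ≠ 0 → gg a r < gg a k

noncomputable def recs (a : ℝ) (n : ℕ) : Finset ℕ :=
  (Finset.Icc 1 n).filter (fun r => IsRec a r)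

lemma mem_recs {a : ℝ} {n r : ℕ} :
    r ∈ recs a n ↔ (1 ≤ r ∧ r ≤ n) ∧ IsRec a r := by
  simp [recs, Finset.mem_filter, Finset.mem_Icc]

lemma gap_min {a : ℝ} {n b c : ℕ} (hb : b ∈ recs a n) (hbc : b < c) (hcn : c ≤ n)
    (hgap : ∀ x ∈ recs a n, ¬(b < x ∧ x < c)) :
    ∀ k, 1 ≤ k → k < c → gg a k ≠ 0 → gg a b ≤ gg a k := by
  obtain ⟨⟨hb1, hbn⟩, hbrec⟩ := mem_recs.mp hb
  by_contra h
  push_neg at h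
  obtain ⟨k, hk1, hkc, hk0, hkb⟩ := h
  set W := (Finset.Icc 1 (c-1)).filter (fun j => gg a j ≠ 0 ∧ gg a j < gg a b) with hW
  have hWne : W.Nonempty := ⟨k, by
    simp only [hW, Finset.mem_filter, Finset.mem_Icc]
    exact ⟨⟨hk1, by omega⟩, hk0, hkb⟩⟩
  set w := W.min' hWne with hw
  have hwW : w ∈ W := W.min'_mem hWne
  simp only [hW, Finset.mem_filter, Finset.mem_Icc] at hwW
  obtain ⟨⟨hw1, hwc⟩, hw0, hwb⟩ := hwW
  have hwrec : IsRec a w := by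
    refine ⟨hw0, fun j hj1 hjw hj0 => ?_⟩
    by_cases hcase : gg a b ≤ gg a j
    · linarith
    · exfalso
      have : j ∈ W := by
        simp only [hW, Finset.mem_filter, Finset.mem_Icc]
        exact ⟨⟨hj1, by omega⟩, hj0, by linarith⟩
      have := W.min'_le j this
      omega
  have hbw : b < w := by
    rcases lt_trichotomy w b with h' | h' | h'
    · have := hbrec.2 w hw1 h' hw0
      linarith
    · rw [h'] at hwb; linarith
    · exact h'
  have hwrecs : w ∈ recs a n := mem_recs.mpr ⟨⟨hw1, by omega⟩, hwrec⟩
  exact hgap w hwrecs ⟨hbw, by omega⟩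

lemma sign_opp {a : ℝ} {n b c : ℕ} (hb : b ∈ recs a n) (hc : c ∈ recs a n) (hbc : b < c)
    (hmin : ∀ k, 1 ≤ k → k < c → gg a k ≠ 0 → gg a b ≤ gg a k) :
    del a b * del a c < 0 := by
  obtain ⟨⟨hb1, hbn⟩, hb0, hbrec⟩ := mem_recs.mp hb
  obtain ⟨⟨hc1, hcn⟩, hc0, hcrec⟩ := mem_recs.mp hc
  have hgcb : gg a c < gg a b := hcrec b hb1 hbc hb0
  rcases lt_trichotomy (del a b * del a c) 0 with h | h | h
  · exact h
  · exfalso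
    rcases mul_eq_zero.mp h with h' | h'
    · exact hb0 (by simp [gg, h'])
    · exact hc0 (by simp [gg, h'])
  · exfalso
    have hsub0 : gg a (c - b) ≠ 0 := by
      intro h0
      have := gg_eq_of_sub_zero hbc.le h0
      linarith
    have h1 : gg a b ≤ gg a (c - b) := hmin _ (by omega) (by omega) hsub0
    have h2 : gg a (c - b) ≤ |del a c - del a b| := gg_sub_le hbc.le
    have H1 : |del a b| ≤ |del a c - del a b| := le_trans h1 h2
    have H2 : |del a c| < |del a b| := hgcb
    rcases abs_cases (del a b) with ⟨eb, sb⟩ | ⟨eb, sb⟩ <;>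
      rcases abs_cases (del a c) with ⟨ec, sc⟩ | ⟨ec, sc⟩ <;>
        rcases abs_cases (del a c - del a b) with ⟨ed, sd⟩ | ⟨ed, sd⟩ <;>
          rw [eb, ec] at H2 <;> rw [eb, ed] at H1 <;> nlinarith [h]

lemma abs_sub_lt_of_same_sign {x y : ℝ} (h : 0 < x * y) (hxy : |y| < |x|) : |y - x| < |x| := by
  rcases abs_cases x with ⟨ex, sx⟩ | ⟨ex, sx⟩ <;>
    rcases abs_cases y with ⟨ey, sy⟩ | ⟨ey, sy⟩ <;>
      rcases abs_cases (y - x) with ⟨ed, sd⟩ | ⟨ed, sd⟩ <;>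
        rw [ex, ey] at hxy <;> rw [ex, ed] <;> nlinarith [h]

lemma recs_filter_card_le (a : ℝ) {n m : ℕ} (hmn : n ≤ 2 * m) :
    ((recs a n).filter (fun r => m < r)).card ≤ 2 := by
  by_contra hcard
  push_neg at hcard
  set T := (recs a n).filter (fun r => m < r) with hT
  have hT3 : 3 ≤ T.card := hcard
  have hTmem : ∀ x ∈ T, x ∈ recs a n ∧ m < x := by
    intro x hx
    simpa [hT, Finset.mem_filter] using hx
  have hmemT : ∀ x, x ∈ recs a n → m < x → x ∈ T := by
    intro x hx hmx
    simp [hT, Finset.mem_filter, hx, hmx]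
  have hne1 : T.Nonempty := Finset.card_pos.mp (by omega)
  set A := T.min' hne1 with hA
  have hAT : A ∈ T := T.min'_mem hne1
  set T2 := T.erase A with hT2
  have hT2card : 2 ≤ T2.card := by
    rw [hT2, Finset.card_erase_of_mem hAT]; omega
  have hne2 : T2.Nonempty := Finset.card_pos.mp (by omega)
  set B := T2.min' hne2 with hB
  have hBT2 : B ∈ T2 := T2.min'_mem hne2
  set T3 := T2.erase B with hT3'
  have hT3card : 1 ≤ T3.card := by
    rw [hT3', Finset.card_erase_of_mem hBT2]; omega
  have hne3 : T3.Nonempty := Finset.card_pos.mp (by omega)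
  set C := T3.min' hne3 with hC
  have hCT3 : C ∈ T3 := T3.min'_mem hne3
  have hBT : B ∈ T := Finset.mem_of_mem_erase hBT2
  have hCT2 : C ∈ T2 := Finset.mem_of_mem_erase hCT3
  have hCT : C ∈ T := Finset.mem_of_mem_erase hCT2
  have hAB : A < B := lt_of_le_of_ne (T.min'_le B hBT) (Finset.ne_of_mem_erase hBT2).symm
  have hBC : B < C := lt_of_le_of_ne (T2.min'_le C hCT2) (Finset.ne_of_mem_erase hCT3).symm
  obtain ⟨hArecs, hmA⟩ := hTmem A hAT
  obtain ⟨hBrecs, hmB⟩ := hTmem B hBT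
  obtain ⟨hCrecs, hmC⟩ := hTmem C hCT
  obtain ⟨⟨hA1, hAn⟩, hA0, hArec⟩ := mem_recs.mp hArecs
  obtain ⟨⟨hB1, hBn⟩, hB0, hBrec⟩ := mem_recs.mp hBrecs
  obtain ⟨⟨hC1, hCn⟩, hC0, hCrec⟩ := mem_recs.mp hCrecs
  have hgapAB : ∀ x ∈ recs a n, ¬(A < x ∧ x < B) := by
    rintro x hx ⟨hAx, hxB⟩
    have hxT : x ∈ T := hmemT x hx (by omega)
    have : B ≤ x := T2.min'_le x (Finset.mem_erase.mpr ⟨by omega, hxT⟩)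
    omega
  have hgapBC : ∀ x ∈ recs a n, ¬(B < x ∧ x < C) := by
    rintro x hx ⟨hBx, hxC⟩
    have hxT : x ∈ T := hmemT x hx (by omega)
    have hxT2 : x ∈ T2 := Finset.mem_erase.mpr ⟨by omega, hxT⟩
    have : C ≤ x := T3.min'_le x (Finset.mem_erase.mpr ⟨by omega, hxT2⟩)
    omega
  have hminAB := gap_min hArecs hAB hBn hgapAB
  have hminBC := gap_min hBrecs hBC hCn hgapBC
  have s1 : del a A * del a B < 0 := sign_opp hArecs hBrecs hAB hminAB
  have s2 : del a B * del a C < 0 := sign_opp hBrecs hCrecs hBC hminBC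
  have same : 0 < del a A * del a C := by
    nlinarith [mul_pos_of_neg_of_neg s1 s2, sq_nonneg (del a B)]
  have hgCA : gg a C < gg a A := hCrec A hA1 (by omega) hA0
  have hsub0 : gg a (C - A) ≠ 0 := by
    intro h0
    have := gg_eq_of_sub_zero (by omega : A ≤ C) h0
    linarith
  have hle : gg a (C - A) ≤ |del a C - del a A| := gg_sub_le (by omega)
  have hlt : |del a C - del a A| < |del a A| :=
    abs_sub_lt_of_same_sign same hgCA
  have hltA : gg a (C - A) < gg a A := lt_of_le_of_lt hle hlt
  have hgtA : A < C - A := by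
    rcases lt_trichotomy (C - A) A with h' | h' | h'
    · have := hArec (C - A) (by omega) h' hsub0
      linarith
    · rw [h'] at hltA; linarith
    · exact h'
  omega

end ThreeGapAux

namespace ThreeGapAux

noncomputable def ff (a : ℝ) (t : ℕ) : Finset ℕ :=
  (Finset.Icc 1 t).filter (fun k => gg a k ≠ 0)

lemma mem_ff {a : ℝ} {t k : ℕ} : k ∈ ff a t ↔ (1 ≤ k ∧ k ≤ t) ∧ gg a k ≠ 0 := by
  simp [ff, Finset.mem_filter, Finset.mem_Icc]

lemma ff_nonempty {a : ℝ} (h1 : gg a 1 ≠ 0) {t : ℕ} (ht : 1 ≤ t) : (ff a t).Nonempty :=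
  ⟨1, mem_ff.mpr ⟨⟨le_refl 1, ht⟩, h1⟩⟩

noncomputable def mm (a : ℝ) (t : ℕ) : ℝ := sInf (gg a '' ↑(ff a t))

lemma mm_eq_inf' {a : ℝ} {t : ℕ} (h : (ff a t).Nonempty) :
    mm a t = (ff a t).inf' h (gg a) :=
  (Finset.inf'_eq_csInf_image _ _ _).symm

lemma mm_classes {a : ℝ} {n m t : ℕ} (h1 : gg a 1 ≠ 0) (hm : 1 ≤ m) (hmt : m ≤ t)
    (htn : t ≤ n) :
    mm a t = mm a m ∨ ∃ r ∈ (recs a n).filter (fun r => m < r), mm a t = gg a r := by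
  have hne_t : (ff a t).Nonempty := ff_nonempty h1 (hm.trans hmt)
  have hne_m : (ff a m).Nonempty := ff_nonempty h1 hm
  set A := (ff a t).filter (fun k => gg a k = (ff a t).inf' hne_t (gg a)) with hAdef
  obtain ⟨k1, hk1, hk1e⟩ := Finset.exists_mem_eq_inf' hne_t (gg a)
  have hAne : A.Nonempty := ⟨k1, by
    simp only [hAdef, Finset.mem_filter]
    exact ⟨hk1, hk1e.symm⟩⟩
  set k0 := A.min' hAne with hk0def
  have hk0A : k0 ∈ A := A.min'_mem hAne
  simp only [hAdef, Finset.mem_filter] at hk0A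
  obtain ⟨hk0ff, hk0e⟩ := hk0A
  obtain ⟨⟨hk01, hk0t⟩, hk00⟩ := mem_ff.mp hk0ff
  by_cases hcase : k0 ≤ m
  · left
    have hk0m : k0 ∈ ff a m := mem_ff.mpr ⟨⟨hk01, hcase⟩, hk00⟩
    have h1' : (ff a m).inf' hne_m (gg a) ≤ gg a k0 := Finset.inf'_le _ hk0m
    obtain ⟨k2, hk2, hk2e⟩ := Finset.exists_mem_eq_inf' hne_m (gg a)
    have hk2t : k2 ∈ ff a t := by
      obtain ⟨⟨h1'', h2''⟩, h3''⟩ := mem_ff.mp hk2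
      exact mem_ff.mpr ⟨⟨h1'', h2''.trans hmt⟩, h3''⟩
    have h2' : (ff a t).inf' hne_t (gg a) ≤ (ff a m).inf' hne_m (gg a) := by
      rw [hk2e]; exact Finset.inf'_le _ hk2t
    rw [mm_eq_inf' hne_t, mm_eq_inf' hne_m]
    rw [hk0e] at h1'
    linarith
  · right
    push_neg at hcase
    refine ⟨k0, ?_, ?_⟩
    · rw [Finset.mem_filter]
      refine ⟨mem_recs.mpr ⟨⟨hk01, hk0t.trans htn⟩, hk00, fun k hk1' hkk0 hk0' => ?_⟩, hcase⟩
      have hkff : k ∈ ff a t := mem_ff.mpr ⟨⟨hk1', by omega⟩, hk0'⟩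
      have hle : (ff a t).inf' hne_t (gg a) ≤ gg a k := Finset.inf'_le _ hkff
      rcases lt_or_eq_of_le hle with h' | h'
      · rw [hk0e]; exact h'
      · exfalso
        have : k ∈ A := by
          simp only [hAdef, Finset.mem_filter]
          exact ⟨hkff, h'.symm⟩
        have := A.min'_le k this
        omega
    · rw [mm_eq_inf' hne_t, hk0e]

end ThreeGapAux



/-- The nearest neighbor distance of `x` in `X`: the infimum (minimum, when `X` is
finite with at least two elements) of distances from `x` to other points of `X`. -/
noncomputable def nnd {M : Type*} [MetricSpace M] (x : M) (X : Set M) : ℝ :=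
  sInf (dist x '' (X \ {x}))

/-- The set of nearest neighbor distances of a set `X`. -/
noncomputable def NND {M : Type*} [MetricSpace M] (X : Set M) : Set ℝ :=
  (fun x => nnd x X) '' X

open ThreeGapAux in
/-- Geometric Three Gap Theorem for the circle `ℝ/ℤ`: for any rotation (by `α`),
point `p`, and `n`, the orbit segment `{p + i • α : i = 0, …, n}` has at most three
distinct nearest neighbor distances. -/
theorem three_gap_circle (α p : AddCircle (1 : ℝ)) (n : ℕ)
    (X : Set (AddCircle (1 : ℝ))) (hX : X = {x | ∃ i : ℕ, i ≤ n ∧ x = p + (i : ℕ) • α})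
    (h2 : X.Nontrivial) :
    (NND X).encard ≤ 3 := by
  classical
  -- extract nontriviality data
  obtain ⟨x, hx, y, hy, hxy⟩ := h2
  rw [hX] at hx hy
  obtain ⟨i0, hi0, rfl⟩ := hx
  obtain ⟨j0, hj0, rfl⟩ := hy
  have hij0 : i0 ≠ j0 := by rintro rfl; exact hxy rfl
  have hn1 : 1 ≤ n := by omega
  have hα : α ≠ 0 := by
    rintro rfl
    exact hxy (by simp)
  -- lift α to ℝ
  obtain ⟨a, ha⟩ := QuotientAddGroup.mk_surjective α
  have hnorm : ∀ k : ℕ, ‖(k • α)‖ = gg a k := by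
    intro k
    rw [← ha]
    have h1 : (k • (a : AddCircle (1:ℝ))) = (((k : ℝ) * a : ℝ) : AddCircle (1:ℝ)) := by
      rw [← nsmul_eq_mul]
      exact (AddCircle.coe_nsmul _ ..).symm
    rw [h1, AddCircle.norm_eq]
    simp [del, gg]
  have hg1 : gg a 1 ≠ 0 := by
    rw [← hnorm 1, one_smul]
    simpa using hα
  have hdist : ∀ i j : ℕ, i ≤ j →
      dist (p + i • α) (p + j • α) = gg a (j - i) := by
    intro i j hij
    rw [dist_eq_norm]
    have hsplit : (j - i) • α + i • α = j • α := by
      rw [← add_nsmul, Nat.sub_add_cancel hij]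
    have : p + i • α - (p + j • α) = -((j - i) • α) := by
      rw [← hsplit]; abel
    rw [this, norm_neg, hnorm]
  set m0 : ℕ := (n + 1) / 2 with hm0def
  have hm01 : 1 ≤ m0 := by omega
  -- nnd computation
  have hnnd : ∀ i : ℕ, i ≤ n → nnd (p + i • α) X = mm a (max i (n - i)) := by
    intro i hi
    have hset : dist (p + i • α) '' (X \ {p + i • α}) = gg a '' ↑(ff a (max i (n - i))) := by
      ext d
      constructor
      · rintro ⟨y, ⟨hyX, hyne⟩, rfl⟩
        rw [hX] at hyX
        obtain ⟨j, hjn, rfl⟩ := hyX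
        have hyne' : p + j • α ≠ p + i • α := by simpa using hyne
        have hdne : dist (p + i • α) (p + j • α) ≠ 0 :=
          dist_ne_zero.mpr (Ne.symm hyne')
        rcases le_total i j with hij | hji
        · refine ⟨j - i, ?_, (hdist i j hij).symm⟩
          refine Finset.mem_coe.mpr (mem_ff.mpr ⟨⟨?_, ?_⟩, ?_⟩)
          · have : i ≠ j := fun h => hyne' (by rw [h])
            omega
          · have : j - i ≤ n - i := by omega
            exact this.trans (le_max_right _ _)
          · rw [← hdist i j hij]; exact hdne
        · refine ⟨i - j, ?_, ?_⟩
          · refine Finset.mem_coe.mpr (mem_ff.mpr ⟨⟨?_, ?_⟩, ?_⟩)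
            · have : i ≠ j := fun h => hyne' (by rw [h])
              omega
            · exact (Nat.sub_le i j).trans (le_max_left _ _)
            · rw [← hdist j i hji, dist_comm]; exact hdne
          · rw [← hdist j i hji, dist_comm]
      · rintro ⟨k, hk, rfl⟩
        obtain ⟨⟨hk1, hkt⟩, hk0⟩ := mem_ff.mp (Finset.mem_coe.mp hk)
        rcases le_or_gt k (n - i) with hcase | hcase
        · refine ⟨p + (i + k) • α, ⟨?_, ?_⟩, ?_⟩
          · rw [hX]; exact ⟨i + k, by omega, rfl⟩
          · have hd : dist (p + i • α) (p + (i + k) • α) = gg a k := by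
              rw [hdist i (i + k) (by omega)]
              congr 1
              omega
            intro hmem
            rw [Set.mem_singleton_iff] at hmem
            rw [hmem] at hd
            simp only [dist_self] at hd
            exact hk0 hd.symm
          · rw [hdist i (i + k) (by omega)]
            congr 1
            omega
        · have hki : k ≤ i := by
            rcases max_cases i (n - i) with ⟨he, _⟩ | ⟨he, _⟩ <;> omega
          refine ⟨p + (i - k) • α, ⟨?_, ?_⟩, ?_⟩
          · rw [hX]; exact ⟨i - k, by omega, rfl⟩
          · have hd : dist (p + i • α) (p + (i - k) • α) = gg a k := by
              rw [dist_comm, hdist (i - k) i (by omega)]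
              congr 1
              omega
            intro hmem
            rw [Set.mem_singleton_iff] at hmem
            rw [hmem] at hd
            simp only [dist_self] at hd
            exact hk0 hd.symm
          · rw [dist_comm, hdist (i - k) i (by omega)]
            congr 1
            omega
    rw [nnd, hset, mm]
  -- NND X is inside a 3-element superset
  set T := (recs a n).filter (fun r => m0 < r) with hTdef
  have hsub : NND X ⊆ {mm a m0} ∪ gg a '' ↑T := by
    rintro v ⟨z, hzX, rfl⟩
    have hzX' := hzX
    rw [hX] at hzX'
    obtain ⟨i, hi, rfl⟩ := hzX'
    show nnd (p + i • α) X ∈ _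
    rw [hnnd i hi]
    set t := max i (n - i) with htdef
    have h1t : m0 ≤ t := by
      have h1 := le_max_left i (n - i)
      have h2 := le_max_right i (n - i)
      omega
    have h2t : t ≤ n := by
      have h1 := max_le hi (Nat.sub_le n i)
      omega
    rcases mm_classes hg1 hm01 h1t h2t with h | ⟨r, hr, he⟩
    · left; exact h
    · right; exact ⟨r, Finset.mem_coe.mpr hr, he.symm⟩
  have hcard : T.card ≤ 2 := recs_filter_card_le a (by omega)
  calc (NND X).encard ≤ ({mm a m0} ∪ gg a '' ↑T : Set ℝ).encard := Set.encard_mono hsub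
    _ ≤ ({mm a m0} : Set ℝ).encard + (gg a '' ↑T).encard := Set.encard_union_le _ _
    _ ≤ 1 + (↑T : Set ℕ).encard := by
        gcongr
        · exact le_of_eq (Set.encard_singleton _)
        · exact Set.encard_image_le _ _
    _ = 1 + T.card := by rw [Set.encard_coe_eq_coe_finsetCard]
    _ ≤ 1 + 2 := by
        gcongr
        exact_mod_cast hcard
    _ = 3 := by norm_num
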